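/- Define Z_p(d) = max over integers M of r_p(M,d). Then for every integer d ≥ 1, Z_p(d) ≤ 1 + (log_p(d) + 2) · Σ_{f=0}^{d−1} Z_p(f). -/

import Mathlib

/-- `r_p(M,d)`: the number of finitely supported nonincreasing sequences `m` of nonnegative
integers with `m 0 ≤ d` and `Σ m_i p^i = M`. -/
noncomputable def rp (p : ℤ) (M d : ℤ) : ℕ :=
  {m : ℕ →₀ ℤ | (∀ i, 0 ≤ m i) ∧ (∀ i, m (i + 1) ≤ m i) ∧ m 0 ≤ d ∧
    (m.sum fun i a => a * p ^ i) = M}.ncard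

/-- `Z_p(d) = max_M r_p(M,d)`. -/
noncomputable def Zp (p : ℤ) (d : ℤ) : ℕ :=
  sSup {n : ℕ | ∃ M : ℤ, rp p M d = n}

namespace Stmt6

def S (p M d : ℤ) : Set (ℕ →₀ ℤ) :=
  {m : ℕ →₀ ℤ | (∀ i, 0 ≤ m i) ∧ (∀ i, m (i + 1) ≤ m i) ∧ m 0 ≤ d ∧
    (m.sum fun i a => a * p ^ i) = M}

lemma rp_eq (p M d : ℤ) : rp p M d = (S p M d).ncard := rfl

lemma anti {m : ℕ →₀ ℤ} (h : ∀ i, m (i + 1) ≤ m i) : ∀ {i j : ℕ}, i ≤ j → m j ≤ m i := by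
  intro i j hij
  induction j, hij using Nat.le_induction with
  | base => exact le_rfl
  | succ n hn ih => exact (h n).trans ih

lemma val_le {p M d : ℤ} {m : ℕ →₀ ℤ} (hm : m ∈ S p M d) (i : ℕ) : m i ≤ d :=
  (anti hm.2.1 (Nat.zero_le i)).trans hm.2.2.1

lemma term_nonneg {p : ℤ} (hp : 2 ≤ p) {m : ℕ →₀ ℤ} (h0 : ∀ i, 0 ≤ m i) (i : ℕ) :
    0 ≤ m i * p ^ i :=
  mul_nonneg (h0 i) (pow_nonneg (by linarith) i)

lemma supp_lt {p M d : ℤ} (hp : 2 ≤ p) {m : ℕ →₀ ℤ} (hm : m ∈ S p M d) {i : ℕ}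
    (hi : m i ≠ 0) : (i : ℤ) < M := by
  have hmem : i ∈ m.support := Finsupp.mem_support_iff.mpr hi
  have h1 : m i * p ^ i ≤ M := by
    rw [← hm.2.2.2, Finsupp.sum]
    exact Finset.single_le_sum (fun j _ => term_nonneg hp hm.1 j) hmem
  have h2 : (1 : ℤ) ≤ m i := by have := (hm.1 i).lt_of_ne (Ne.symm hi); omega
  have h3 : (2 : ℤ) ^ i ≤ p ^ i := pow_le_pow_left₀ (by norm_num) hp i
  have h4 : (i : ℤ) < 2 ^ i := by exact_mod_cast (Nat.lt_two_pow_self (n := i))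
  nlinarith [pow_nonneg (show (0:ℤ) ≤ 2 by norm_num) i]

lemma S_finite {p : ℤ} (hp : 2 ≤ p) (M d : ℤ) : (S p M d).Finite := by
  classical
  set n := M.toNat + 1 with hn
  have key : ∀ m ∈ S p M d, ∀ i, n ≤ i → m i = 0 := by
    intro m hm i hi
    by_contra h
    have h1 := supp_lt hp hm h
    have h2 : M < (i : ℤ) := by
      calc M ≤ M.toNat := Int.self_le_toNat M
      _ < (n : ℤ) := by exact_mod_cast Nat.lt_succ_self _
      _ ≤ i := by exact_mod_cast hi
    omega
  apply Set.Finite.of_finite_image (f := fun m : ℕ →₀ ℤ => fun i : Fin n => m i)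
  · apply Set.Finite.subset (Set.finite_Icc (fun _ : Fin n => (0:ℤ)) (fun _ => d))
    rintro _ ⟨m, hm, rfl⟩
    exact ⟨fun i => hm.1 i, fun i => val_le hm i⟩
  · intro m₁ h₁ m₂ h₂ heq
    ext i
    by_cases hi : i < n
    · exact congrFun heq ⟨i, hi⟩
    · rw [key m₁ h₁ i (le_of_not_gt hi), key m₂ h₂ i (le_of_not_gt hi)]

lemma supp_range {p M d : ℤ} {m : ℕ →₀ ℤ} (hm : m ∈ S p M d) :
    ∃ k, m.support = Finset.range k := by
  classical
  have dc : ∀ {i j : ℕ}, i ≤ j → j ∈ m.support → i ∈ m.support := by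
    intro i j hij hj
    rw [Finsupp.mem_support_iff] at *
    intro h
    have : m j ≤ 0 := h ▸ anti hm.2.1 hij
    exact hj (le_antisymm this (hm.1 j))
  rcases eq_or_ne m.support ∅ with h | h
  · exact ⟨0, by simp [h]⟩
  · refine ⟨m.support.max' (Finset.nonempty_of_ne_empty h) + 1, ?_⟩
    ext i
    simp only [Finset.mem_range, Nat.lt_succ_iff]
    exact ⟨fun hi => Finset.le_max' _ _ hi, fun hi => dc hi (m.support.max'_mem _)⟩

/-- geometric partial sums -/
noncomputable def G (p : ℤ) (k : ℕ) : ℤ := ∑ i ∈ Finset.range k, p ^ i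

lemma G_le {p : ℤ} (hp : 2 ≤ p) (k : ℕ) : G p k ≤ p ^ k - 1 := by
  have h := geom_sum_mul p k
  have h2 : (0:ℤ) ≤ G p k :=
    Finset.sum_nonneg (fun i _ => pow_nonneg (by linarith : (0:ℤ) ≤ p) i)
  unfold G at *
  nlinarith

lemma le_G {p : ℤ} (hp : 2 ≤ p) {k : ℕ} (hk : 1 ≤ k) : p ^ (k-1) ≤ G p k := by
  apply Finset.single_le_sum (f := fun i => p ^ i) (fun i _ => pow_nonneg (by linarith) i)
  simp; omega

lemma nat_le_G {p : ℤ} (hp : 2 ≤ p) (k : ℕ) : (k : ℤ) ≤ G p k := by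
  calc (k:ℤ) = ∑ i ∈ Finset.range k, 1 := by simp
  _ ≤ _ := Finset.sum_le_sum (fun i _ => one_le_pow₀ (by linarith))

/-- The key recursion bound. -/
lemma rp_le_step (p : ℕ) (hp : 2 ≤ p) (d : ℕ) (hd : 1 ≤ d)
    (hbdd : BddAbove {n : ℕ | ∃ M : ℤ, rp p M ((d:ℤ) - 1) = n}) (M : ℤ) :
    rp p M d ≤ (Nat.log p d + 2) * Zp p ((d:ℤ) - 1) := by
  classical
  have hpZ : (2:ℤ) ≤ (p:ℤ) := by exact_mod_cast hp
  set Z' := Zp p ((d:ℤ) - 1) with hZ'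
  have hZ : ∀ M' : ℤ, rp p M' ((d:ℤ) - 1) ≤ Z' := fun M' => le_csSup hbdd ⟨M', rfl⟩
  set L := Nat.log p d with hL
  set F := (S_finite hpZ M d).toFinset with hF
  set K := (Finset.range (M.toNat + 1)).filter
      (fun k => G p k ≤ M ∧ M ≤ (d:ℤ) * G p k) with hK
  -- sum over range k formula
  have hsum_range : ∀ m ∈ S (p:ℤ) M d, ∀ k, m.support = Finset.range k →
      (∑ i ∈ Finset.range k, m i * (p:ℤ) ^ i) = M := by
    intro m hm k hk
    rw [← hm.2.2.2, Finsupp.sum, hk]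
  have hge1 : ∀ m ∈ S (p:ℤ) M d, ∀ k, m.support = Finset.range k →
      ∀ i ∈ Finset.range k, (1:ℤ) ≤ m i := by
    intro m hm k hk i hi
    rw [← hk, Finsupp.mem_support_iff] at hi
    have := (hm.1 i).lt_of_ne (Ne.symm hi); omega
  -- membership of support size in K
  have hKmem : ∀ m ∈ S (p:ℤ) M d, ∀ k, m.support = Finset.range k → k ∈ K := by
    intro m hm k hk
    have h1 : G p k ≤ M := by
      rw [← hsum_range m hm k hk]
      apply Finset.sum_le_sum
      intro i hi
      have := hge1 m hm k hk i hi
      nlinarith [pow_nonneg (by linarith : (0:ℤ) ≤ (p:ℤ)) i]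
    have h2 : M ≤ (d:ℤ) * G p k := by
      rw [← hsum_range m hm k hk]
      unfold G
      rw [Finset.mul_sum]
      apply Finset.sum_le_sum
      intro i hi
      have := val_le hm i
      nlinarith [pow_nonneg (by linarith : (0:ℤ) ≤ (p:ℤ)) i]
    have h3 : (k:ℤ) ≤ M := (nat_le_G hpZ k).trans h1
    rw [hK, Finset.mem_filter, Finset.mem_range]
    exact ⟨by omega, h1, h2⟩
  -- F covered by classes
  have hcover : F ⊆ K.biUnion (fun k => F.filter (fun m => m.support = Finset.range k)) := by
    intro m hm
    have hmS : m ∈ S (p:ℤ) M d := (Set.Finite.mem_toFinset _).mp hm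
    obtain ⟨k, hk⟩ := supp_range hmS
    exact Finset.mem_biUnion.mpr ⟨k, hKmem m hmS k hk, Finset.mem_filter.mpr ⟨hm, hk⟩⟩
  -- each class injects into S (M - G p k) (d-1)
  have hclass : ∀ k, (F.filter (fun m => m.support = Finset.range k)).card ≤ Z' := by
    intro k
    set T := (S_finite hpZ (M - G p k) ((d:ℤ) - 1)).toFinset with hT
    have hcard : (F.filter (fun m => m.support = Finset.range k)).card ≤ T.card := by
      apply Finset.card_le_card_of_injOn
        (fun m => Finsupp.mapRange (fun a => max (a-1) 0) (by simp) m)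
      · intro m hm
        obtain ⟨hmF, hsupp⟩ := Finset.mem_filter.mp hm
        have hmS : m ∈ S (p:ℤ) M d := (Set.Finite.mem_toFinset _).mp hmF
        obtain ⟨h0, h1, h2, h3⟩ := hmS
        set m' := Finsupp.mapRange (fun a : ℤ => max (a-1) 0) (by simp) m with hm'def
        have hm' : ∀ i, m' i = max (m i - 1) 0 := fun i => Finsupp.mapRange_apply
        rw [Finset.mem_coe, Set.Finite.mem_toFinset]
        refine ⟨fun i => by rw [hm']; exact le_max_right _ _,
            fun i => by rw [hm', hm']; exact max_le_max (by linarith [h1 i]) le_rfl, ?_, ?_⟩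
        · rw [hm']
          have : (1:ℤ) ≤ (d:ℤ) := by exact_mod_cast hd
          exact max_le (by linarith) (by linarith)
        · have hsub : m'.support ⊆ Finset.range k := by
            intro i hi
            rw [Finsupp.mem_support_iff] at hi
            rw [← hsupp, Finsupp.mem_support_iff]
            intro h
            exact hi (by rw [hm', h]; simp)
          rw [Finsupp.sum_of_support_subset _ hsub _ (by intros; simp)]
          have hpos : ∀ i ∈ Finset.range k, m' i = m i - 1 := by
            intro i hi
            have h4 := hge1 m ⟨h0, h1, h2, h3⟩ k hsupp i hi
            rw [hm']; omega
          calc ∑ i ∈ Finset.range k, m' i * (p:ℤ) ^ i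
              = ∑ i ∈ Finset.range k, (m i * (p:ℤ) ^ i - (p:ℤ) ^ i) := by
                apply Finset.sum_congr rfl; intro i hi; rw [hpos i hi]; ring
            _ = M - G p k := by
                rw [Finset.sum_sub_distrib, hsum_range m ⟨h0, h1, h2, h3⟩ k hsupp]; rfl
      · intro m₁ h₁ m₂ h₂ heq
        simp only [Finset.coe_filter, Set.mem_setOf_eq] at h₁ h₂
        obtain ⟨h₁F, h₁s⟩ := h₁
        obtain ⟨h₂F, h₂s⟩ := h₂
        have hS₁ : m₁ ∈ S (p:ℤ) M d := (Set.Finite.mem_toFinset _).mp h₁F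
        have hS₂ : m₂ ∈ S (p:ℤ) M d := (Set.Finite.mem_toFinset _).mp h₂F
        ext i
        by_cases hi : i ∈ Finset.range k
        · have e1 := hge1 m₁ hS₁ k h₁s i hi
          have e2 := hge1 m₂ hS₂ k h₂s i hi
          have := congrFun (congrArg (fun f : ℕ →₀ ℤ => (f : ℕ → ℤ)) heq) i
          simp only [Finsupp.mapRange_apply] at this
          omega
        · have z1 : m₁ i = 0 := by
            by_contra h; exact hi (h₁s ▸ Finsupp.mem_support_iff.mpr h)
          have z2 : m₂ i = 0 := by
            by_contra h; exact hi (h₂s ▸ Finsupp.mem_support_iff.mpr h)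
          rw [z1, z2]
    calc (F.filter (fun m => m.support = Finset.range k)).card ≤ T.card := hcard
      _ = rp p (M - G p k) ((d:ℤ) - 1) := by
          rw [rp_eq, Set.ncard_eq_toFinset_card _ (S_finite hpZ (M - G p k) ((d:ℤ) - 1))]
      _ ≤ Z' := hZ _
  -- K has few elements
  have hKcard : K.card ≤ L + 2 := by
    rcases Finset.eq_empty_or_nonempty K with h | h
    · simp [h]
    · set k0 := K.min' h with hk0
      have hsub : K ⊆ Finset.Icc k0 (k0 + L + 1) := by
        intro k hk
        rw [Finset.mem_Icc]
        refine ⟨Finset.min'_le _ _ hk, ?_⟩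
        by_contra hcon
        push_neg at hcon
        have hk1 : 1 ≤ k := by omega
        obtain ⟨-, hG1, hG2⟩ := Finset.mem_filter.mp hk
        obtain ⟨-, hG1', hG2'⟩ := Finset.mem_filter.mp (K.min'_mem h)
        have e1 : (p:ℤ) ^ (k-1) ≤ M := (le_G hpZ hk1).trans hG1
        have e2 : M ≤ (d:ℤ) * (p:ℤ) ^ k0 := by
          have := G_le hpZ k0
          have hd' : (0:ℤ) ≤ (d:ℤ) := by positivity
          nlinarith
        have e3 : (p:ℤ) ^ (k - 1 - k0) * (p:ℤ) ^ k0 ≤ (d:ℤ) * (p:ℤ) ^ k0 := by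
          rw [← pow_add]
          have : k - 1 - k0 + k0 = k - 1 := by omega
          rw [this]
          exact e1.trans e2
        have e4 : (p:ℤ) ^ (k - 1 - k0) ≤ (d:ℤ) :=
          le_of_mul_le_mul_right e3 (pow_pos (by linarith) k0)
        have e5 : p ^ (k - 1 - k0) ≤ d := by exact_mod_cast e4
        have e6 : k - 1 - k0 ≤ L :=
          (Nat.le_log_iff_pow_le (b := p) (y := d) (by omega) (by omega)).mpr e5
        omega
      calc K.card ≤ (Finset.Icc k0 (k0 + L + 1)).card := Finset.card_le_card hsub
        _ = L + 2 := by rw [Nat.card_Icc]; omega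
  -- combine
  calc rp p M d = F.card := by
        rw [rp_eq, Set.ncard_eq_toFinset_card _ (S_finite hpZ M d)]
    _ ≤ (K.biUnion (fun k => F.filter (fun m => m.support = Finset.range k))).card :=
        Finset.card_le_card hcover
    _ ≤ ∑ k ∈ K, (F.filter (fun m => m.support = Finset.range k)).card :=
        Finset.card_biUnion_le
    _ ≤ ∑ _k ∈ K, Z' := Finset.sum_le_sum (fun k _ => hclass k)
    _ = K.card * Z' := by rw [Finset.sum_const, smul_eq_mul]
    _ ≤ (L + 2) * Z' := Nat.mul_le_mul_right _ hKcard

lemma bdd (p : ℕ) (hp : 2 ≤ p) (d : ℕ) :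
    BddAbove {n : ℕ | ∃ M : ℤ, rp p M d = n} := by
  induction d with
  | zero =>
    refine ⟨1, ?_⟩
    rintro n ⟨M, rfl⟩
    have hpZ : (2:ℤ) ≤ (p:ℤ) := by exact_mod_cast hp
    rw [rp_eq]
    have hsub : S (p:ℤ) M 0 ⊆ {0} := by
      intro m hm
      have : ∀ i, m i = 0 := fun i =>
        le_antisymm ((anti hm.2.1 (Nat.zero_le i)).trans hm.2.2.1) (hm.1 i)
      simp only [Set.mem_singleton_iff]
      ext i; exact this i
    calc (S (p:ℤ) M 0).ncard ≤ ({0} : Set (ℕ →₀ ℤ)).ncard :=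
          Set.ncard_le_ncard hsub (Set.finite_singleton _)
      _ = 1 := Set.ncard_singleton _
  | succ e ih =>
    refine ⟨(Nat.log p (e+1) + 2) * Zp p ((((e:ℕ)+1 : ℕ):ℤ) - 1), ?_⟩
    rintro n ⟨M, rfl⟩
    have hcast : ((e:ℤ)) = (((e+1 : ℕ):ℤ) - 1) := by push_cast; ring
    have ih' : BddAbove {n : ℕ | ∃ M : ℤ, rp p M (((e+1 : ℕ):ℤ) - 1) = n} := by
      rw [← hcast]; exact_mod_cast ih
    have := rp_le_step p hp (e+1) (by omega) ih' M
    exact_mod_cast this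

lemma rp_le_Zp (p : ℕ) (hp : 2 ≤ p) (d : ℕ) (M : ℤ) : rp p M d ≤ Zp p d :=
  le_csSup (bdd p hp d) ⟨M, rfl⟩

lemma Zp_le (p : ℕ) (hp : 2 ≤ p) (d : ℕ) (hd : 1 ≤ d) :
    Zp p d ≤ (Nat.log p d + 2) * Zp p ((d:ℤ) - 1) := by
  refine csSup_le ⟨rp (p:ℤ) 0 (d:ℤ), 0, rfl⟩ ?_
  rintro n ⟨M, rfl⟩
  have hcast : ((d:ℤ) - 1) = (((d - 1 : ℕ)):ℤ) := by
    have : 1 ≤ d := hd; push_cast [this]; ring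
  have hbdd : BddAbove {n : ℕ | ∃ M : ℤ, rp p M ((d:ℤ) - 1) = n} := by
    rw [hcast]; exact bdd p hp (d-1)
  exact rp_le_step p hp d hd hbdd M

end Stmt6

/-- `Z_p(d) ≤ 1 + (log_p d + 2) · Σ_{f=0}^{d−1} Z_p(f)` for `d ≥ 1`. -/
theorem stmt_6 (p : ℕ) (hp : p.Prime) (d : ℕ) (hd : 1 ≤ d) :
    (Zp p d : ℝ) ≤ 1 + (Real.logb p d + 2) * ∑ f ∈ Finset.range d, (Zp p f : ℝ) := by
  have hp2 : 2 ≤ p := hp.two_le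
  have hcast : ((d:ℤ) - 1) = (((d - 1 : ℕ)):ℤ) := by push_cast [hd]; ring
  have h1 : Zp p d ≤ (Nat.log p d + 2) * Zp p ((d-1 : ℕ) : ℤ) := by
    rw [← hcast]; exact Stmt6.Zp_le p hp2 d hd
  -- real-number estimates
  have hp1R : (1:ℝ) < (p:ℝ) := by exact_mod_cast hp.one_lt
  have hd1R : (1:ℝ) ≤ (d:ℝ) := by exact_mod_cast hd
  have hlog_nonneg : 0 ≤ Real.logb p d := Real.logb_nonneg hp1R hd1R
  have hnatlog : ((Nat.log p d : ℝ)) ≤ Real.logb p d := by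
    have hpow : ((p:ℝ)) ^ (Nat.log p d) ≤ (d:ℝ) := by
      exact_mod_cast Nat.pow_log_le_self p (by omega : d ≠ 0)
    calc ((Nat.log p d : ℝ)) = Real.logb p ((p:ℝ) ^ (Nat.log p d)) := by
          rw [Real.logb_pow, Real.logb_self_eq_one hp1R]
          ring
      _ ≤ Real.logb p d := Real.logb_le_logb_of_le hp1R (by positivity) hpow
  have hterm : (Zp p ((d-1:ℕ):ℤ) : ℝ) ≤ ∑ f ∈ Finset.range d, (Zp p f : ℝ) := by
    apply Finset.single_le_sum (f := fun f : ℕ => (Zp p f : ℝ))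
      (fun f _ => by positivity)
    rw [Finset.mem_range]; omega
  have hZnn : (0:ℝ) ≤ (Zp p ((d-1:ℕ):ℤ) : ℝ) := by positivity
  have h1R : (Zp p d : ℝ) ≤ ((Nat.log p d : ℝ) + 2) * (Zp p ((d-1:ℕ):ℤ) : ℝ) := by
    exact_mod_cast h1
  calc (Zp p d : ℝ) ≤ ((Nat.log p d : ℝ) + 2) * (Zp p ((d-1:ℕ):ℤ) : ℝ) := h1R
    _ ≤ (Real.logb p d + 2) * ∑ f ∈ Finset.range d, (Zp p f : ℝ) := by
        apply mul_le_mul (by linarith) hterm hZnn (by linarith)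
    _ ≤ 1 + (Real.logb p d + 2) * ∑ f ∈ Finset.range d, (Zp p f : ℝ) := by linarith
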